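/- Let Q be a quantale, M a shrinkable Q-module, and F_1, …, F_n multiplicative filters of Q. Suppose x_1, …, x_n ∈ M satisfy x_i ≼¹_{F_i + F_j} x_j for all i ≠ j. Then there exists x ∈ M such that x ≼¹_{F_i} x_i and x_i ≼¹_{F_i} x for every i = 1, …, n. -/

import Mathlib

universe u v

/-- A (commutative, integral) quantale: a complete lattice with a commutative monoid
structure whose unit is the top element and whose multiplication distributes over
arbitrary suprema. -/
class IntegralQuantale (Q : Type u) extends CompleteLattice Q, CommMonoid Q where
  one_eq_top : (1 : Q) = ⊤
  mul_sSup : ∀ (a : Q) (S : Set Q), a * sSup S = ⨆ b ∈ S, a * b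

/-- A module over a quantale. -/
class QModule (Q : Type u) [IntegralQuantale Q] (M : Type v) extends
    CompleteLattice M, SMul Q M where
  mul_smul' : ∀ (p q : Q) (m : M), (p * q) • m = p • (q • m)
  top_smul' : ∀ m : M, (⊤ : Q) • m = m
  smul_sSup' : ∀ (q : Q) (S : Set M), S.Nonempty → q • sSup S = ⨆ m ∈ S, q • m
  sSup_smul' : ∀ (S : Set Q) (m : M), S.Nonempty → (⨆ q ∈ S, (q : Q)) • m = ⨆ q ∈ S, q • m

/-- A multiplicative filter of a quantale. -/
def IsMFilter {Q : Type u} [IntegralQuantale Q] (F : Set Q) : Prop :=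
  ⊤ ∈ F ∧ (∀ a ∈ F, ∀ b : Q, a ≤ b → b ∈ F) ∧ ∀ a ∈ F, ∀ b ∈ F, a * b ∈ F

/-- `a ≼¹_F b`: `a` is locally less than `b` in one step; witnessed by a nonempty
family of pairs `(aᵢ, sᵢ)` with `sᵢ ∈ F`, `a ≤ ⨆ aᵢ` and `sᵢ • aᵢ ≤ b`. -/
def stepLE {Q : Type u} {M : Type v} [IntegralQuantale Q] [QModule Q M]
    (F : Set Q) (a b : M) : Prop :=
  ∃ P : Set (M × Q), P.Nonempty ∧ (∀ p ∈ P, p.2 ∈ F) ∧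
    (a ≤ ⨆ p ∈ P, Prod.fst p) ∧ ∀ p ∈ P, p.2 • p.1 ≤ b

/-- `a ≼ⁿ_F b`: locally less than in `n` steps. -/
def nStepLE {Q : Type u} {M : Type v} [IntegralQuantale Q] [QModule Q M]
    (F : Set Q) : ℕ → M → M → Prop
  | 0, a, b => a = b
  | n + 1, a, b => ∃ c : M, stepLE F a c ∧ nStepLE F n c b

/-- `a ≼_F b`: locally less than (in some positive number of steps). -/
def localLE {Q : Type u} {M : Type v} [IntegralQuantale Q] [QModule Q M]
    (F : Set Q) (a b : M) : Prop :=
  ∃ n : ℕ, 1 ≤ n ∧ nStepLE F n a b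

/-- A complete lattice is shrinkable if every inequality `x ≤ ⨆ xᵢ` can be shrunk
to an equality `x = ⨆ yⱼ` with each `yⱼ` below a finite subsupremum of the `xᵢ`. -/
def Shrinkable (L : Type u) [CompleteLattice L] : Prop :=
  ∀ (x : L) (S : Set L), S.Nonempty → x ≤ sSup S →
    ∃ Y : Set L, Y.Nonempty ∧ x = sSup Y ∧
      ∀ y ∈ Y, ∃ T : Finset L, T.Nonempty ∧ ↑T ⊆ S ∧ y ≤ T.sup id
/-- The sum `F + G` of two multiplicative filters:
`{q : ∃ s ∈ F, ∃ t ∈ G, s * t ≤ q}`. -/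
def filterSum {Q : Type u} [IntegralQuantale Q] (F G : Set Q) : Set Q :=
  {q : Q | ∃ s ∈ F, ∃ t ∈ G, s * t ≤ q}

section Helpers

variable {Q : Type u} {M : Type v} [IntegralQuantale Q] [QModule Q M]

lemma IQ.one_top : (1 : Q) = ⊤ := IntegralQuantale.one_eq_top

lemma IQ.mul_mono_right (a : Q) {b c : Q} (h : b ≤ c) : a * b ≤ a * c := by
  have hs : sSup {b, c} = c := by rw [sSup_pair, sup_eq_right.mpr h]
  have h2 := IntegralQuantale.mul_sSup a {b, c}
  rw [hs] at h2
  rw [h2]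
  exact le_iSup₂_of_le b (Set.mem_insert b {c}) le_rfl

lemma IQ.mul_le_left (a b : Q) : a * b ≤ a := by
  calc a * b ≤ a * ⊤ := IQ.mul_mono_right a le_top
    _ = a := by rw [← IQ.one_top, mul_one]

lemma IQ.mul_mono {a b c d : Q} (h1 : a ≤ b) (h2 : c ≤ d) : a * c ≤ b * d := by
  calc a * c ≤ a * d := IQ.mul_mono_right a h2
    _ ≤ b * d := by rw [mul_comm a d, mul_comm b d]; exact IQ.mul_mono_right d h1

lemma QM.smul_mono_right (q : Q) {a b : M} (h : a ≤ b) : q • a ≤ q • b := by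
  have hs : sSup {a, b} = b := by rw [sSup_pair, sup_eq_right.mpr h]
  have h2 := QModule.smul_sSup' q {a, b} ⟨a, Set.mem_insert a {b}⟩
  rw [hs] at h2
  rw [h2]
  exact le_iSup₂_of_le a (Set.mem_insert a {b}) le_rfl

lemma QM.smul_mono_left {p q : Q} (h : p ≤ q) (m : M) : p • m ≤ q • m := by
  have h2 := QModule.sSup_smul' {p, q} m ⟨p, Set.mem_insert p {q}⟩
  rw [← sSup_eq_iSup, sSup_pair, sup_eq_right.mpr h] at h2
  rw [h2]
  exact le_iSup₂_of_le p (Set.mem_insert p {q}) le_rfl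

lemma QM.smul_le_self (q : Q) (m : M) : q • m ≤ m := by
  have := QM.smul_mono_left (le_top (a := q)) m
  rwa [QModule.top_smul'] at this

lemma IQ.prod_le_single {X : Type*} [DecidableEq X] (T : Finset X) (f : X → Q) {x : X}
    (hx : x ∈ T) : (∏ y ∈ T, f y) ≤ f x := by
  rw [← Finset.mul_prod_erase T f hx]
  exact IQ.mul_le_left _ _

lemma IQ.prod_mem_mfilter {F : Set Q} (hF : IsMFilter F) {X : Type*} [DecidableEq X]
    (T : Finset X) (f : X → Q) (hf : ∀ x ∈ T, f x ∈ F) : (∏ x ∈ T, f x) ∈ F := by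
  induction T using Finset.induction_on with
  | empty => simpa [IQ.one_top] using hF.1
  | insert _ _ hx ih =>
    rw [Finset.prod_insert hx]
    exact hF.2.2 _ (hf _ (Finset.mem_insert_self _ _)) _
      (ih fun y hy => hf y (Finset.mem_insert_of_mem hy))

lemma isMFilter_filterSum {F G : Set Q} (hF : IsMFilter F) (hG : IsMFilter G) :
    IsMFilter (filterSum F G) := by
  refine ⟨⟨⊤, hF.1, ⊤, hG.1, le_top⟩, ?_, ?_⟩
  · rintro a ⟨s, hs, t, ht, hst⟩ b hab
    exact ⟨s, hs, t, ht, hst.trans hab⟩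
  · rintro a ⟨s1, hs1, t1, ht1, h1⟩ b ⟨s2, hs2, t2, ht2, h2⟩
    refine ⟨s1 * s2, hF.2.2 _ hs1 _ hs2, t1 * t2, hG.2.2 _ ht1 _ ht2, ?_⟩
    calc s1 * s2 * (t1 * t2) = (s1 * t1) * (s2 * t2) := mul_mul_mul_comm s1 s2 t1 t2
      _ ≤ a * b := IQ.mul_mono h1 h2

lemma finite_glue {H : Set Q} (hH : IsMFilter H) {b : M} {Y : Set M}
    (hY : ∀ w ∈ Y, ∃ u ∈ H, u • w ≤ b) {d : M} {T : Finset M}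
    (hTne : T.Nonempty) (hTY : ↑T ⊆ Y) (hd : d ≤ T.sup id) :
    ∃ u ∈ H, u • d ≤ b := by
  classical
  have hch : ∀ w : M, ∃ u : Q, w ∈ Y → u ∈ H ∧ u • w ≤ b := by
    intro w
    by_cases hw : w ∈ Y
    · obtain ⟨u, hu1, hu2⟩ := hY w hw
      exact ⟨u, fun _ => ⟨hu1, hu2⟩⟩
    · exact ⟨1, fun h => absurd h hw⟩
  choose g hg using hch
  refine ⟨∏ w ∈ T, g w, IQ.prod_mem_mfilter hH T g (fun w hw => (hg w (hTY hw)).1), ?_⟩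
  have h1 : (∏ w ∈ T, g w) • d ≤ (∏ w ∈ T, g w) • (T.sup id) := QM.smul_mono_right _ hd
  have h2 : (T.sup id : M) = sSup (↑T : Set M) := Finset.sup_id_eq_sSup T
  have h3 := QModule.smul_sSup' (∏ w ∈ T, g w) (↑T : Set M) (Finset.coe_nonempty.mpr hTne)
  refine h1.trans ?_
  rw [h2, h3]
  exact iSup₂_le fun m hm =>
    (QM.smul_mono_left (IQ.prod_le_single T g hm) m).trans (hg m (hTY hm)).2

lemma shrink_stepLE (hM : Shrinkable M) {F : Set Q} (hF : IsMFilter F) {a b : M}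
    (h : stepLE F a b) :
    ∃ Y : Set M, Y.Nonempty ∧ a = sSup Y ∧ ∀ z ∈ Y, ∃ u ∈ F, u • z ≤ b := by
  obtain ⟨P, hPne, hPF, hcov, hact⟩ := h
  have hcov' : a ≤ sSup (Prod.fst '' P) := by rw [sSup_image]; exact hcov
  obtain ⟨Y, hYne, hYeq, hY⟩ := hM a _ (hPne.image _) hcov'
  refine ⟨Y, hYne, hYeq, fun z hz => ?_⟩
  obtain ⟨T, hTne, hTsub, hzT⟩ := hY z hz
  refine finite_glue hF (fun w hw => ?_) hTne hTsub hzT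
  obtain ⟨p, hp, rfl⟩ := hw
  exact ⟨p.2, hPF p hp, hact p hp⟩

end Helpers
section ClaimB

variable {Q : Type u} {M : Type v} [IntegralQuantale Q] [QModule Q M]

lemma claimB {n : ℕ} (hM : Shrinkable M) {F : Fin n → Set Q} (hF : ∀ i, IsMFilter (F i))
    {x : Fin n → M} (hx : ∀ i j, i ≠ j → stepLE (filterSum (F i) (F j)) (x i) (x j))
    (i : Fin n) (J : Finset (Fin n)) :
    i ∉ J → ∃ Z : Set (M × Q), Z.Nonempty ∧ (∀ p ∈ Z, p.2 ∈ F i ∧ p.1 ≤ x i) ∧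
      (x i ≤ ⨆ p ∈ Z, Prod.fst p) ∧
      ∀ p ∈ Z, ∀ j ∈ J, ∃ u ∈ F j, u • (p.2 • p.1) ≤ x j := by
  classical
  induction J using Finset.induction_on with
  | empty =>
    intro _
    refine ⟨{(x i, ⊤)}, ⟨_, rfl⟩, ?_, ?_, ?_⟩
    · rintro p hp
      rw [Set.mem_singleton_iff] at hp
      subst hp
      exact ⟨(hF i).1, le_rfl⟩
    · exact le_iSup₂_of_le (x i, ⊤) rfl le_rfl
    · simp
  | @insert j' J' hj' ih =>
    intro hins
    rw [Finset.mem_insert] at hins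
    push_neg at hins
    obtain ⟨hij', hiJ'⟩ := hins
    obtain ⟨Z, hZne, hZmem, hZcov, hZact⟩ := ih hiJ'
    obtain ⟨Y, hYne, hYeq, hY⟩ :=
      shrink_stepLE hM (isMFilter_filterSum (hF i) (hF j')) (hx i j' hij')
    have hDex : ∀ p : M × Q, ∃ D : Set M, p ∈ Z → D.Nonempty ∧ p.1 = sSup D ∧
        ∀ d ∈ D, ∃ T : Finset M, T.Nonempty ∧ ↑T ⊆ Y ∧ d ≤ T.sup id := by
      intro p
      by_cases hp : p ∈ Z
      · obtain ⟨D, h1, h2, h3⟩ := hM p.1 Y hYne (le_of_le_of_eq (hZmem p hp).2 hYeq)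
        exact ⟨D, fun _ => ⟨h1, h2, h3⟩⟩
      · exact ⟨∅, fun h => absurd h hp⟩
    choose D hD using hDex
    have hstex : ∀ d : M, ∃ st : Q × Q,
        (∃ T : Finset M, T.Nonempty ∧ ↑T ⊆ Y ∧ d ≤ T.sup id) →
          st.1 ∈ F i ∧ st.2 ∈ F j' ∧ (st.1 * st.2) • d ≤ x j' := by
      intro d
      by_cases hd : ∃ T : Finset M, T.Nonempty ∧ ↑T ⊆ Y ∧ d ≤ T.sup id
      · obtain ⟨T, hT1, hT2, hT3⟩ := hd
        obtain ⟨u, hu, hud⟩ :=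
          finite_glue (isMFilter_filterSum (hF i) (hF j')) hY hT1 hT2 hT3
        obtain ⟨s, hs, t, ht, hstu⟩ := hu
        exact ⟨(s, t), fun _ => ⟨hs, ht, (QM.smul_mono_left hstu d).trans hud⟩⟩
      · exact ⟨(1, 1), fun h => absurd h hd⟩
    choose st hst using hstex
    refine ⟨⋃ p ∈ Z, (fun d => (d, p.2 * (st d).1)) '' (D p), ?_, ?_, ?_, ?_⟩
    · obtain ⟨p, hp⟩ := hZne
      obtain ⟨d, hd⟩ := ((hD p) hp).1
      exact ⟨_, Set.mem_biUnion hp ⟨d, hd, rfl⟩⟩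
    · rintro q hq
      simp only [Set.mem_iUnion, Set.mem_image] at hq
      obtain ⟨p, hp, d, hd, rfl⟩ := hq
      obtain ⟨hDne, hDeq, hDfin⟩ := hD p hp
      refine ⟨(hF i).2.2 _ (hZmem p hp).1 _ (hst d (hDfin d hd)).1, ?_⟩
      calc (d : M) ≤ sSup (D p) := le_sSup hd
        _ = p.1 := hDeq.symm
        _ ≤ x i := (hZmem p hp).2
    · refine hZcov.trans (iSup₂_le fun p hp => ?_)
      obtain ⟨hDne, hDeq, hDfin⟩ := hD p hp
      rw [hDeq]
      refine sSup_le fun d hd => ?_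
      exact le_iSup₂_of_le (d, p.2 * (st d).1) (Set.mem_biUnion hp ⟨d, hd, rfl⟩) le_rfl
    · rintro q hq j hj
      simp only [Set.mem_iUnion, Set.mem_image] at hq
      obtain ⟨p, hp, d, hd, rfl⟩ := hq
      obtain ⟨hDne, hDeq, hDfin⟩ := hD p hp
      obtain ⟨hs1, hs2, hs3⟩ := hst d (hDfin d hd)
      rw [Finset.mem_insert] at hj
      rcases hj with rfl | hj
      · refine ⟨(st d).2, hs2, ?_⟩
        have he : (st d).2 • ((p.2 * (st d).1) • d) = p.2 • (((st d).1 * (st d).2) • d) := by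
          rw [← QModule.mul_smul', ← QModule.mul_smul']
          congr 1
          rw [mul_left_comm, mul_comm (st d).2]
        rw [he]
        exact (QM.smul_mono_right p.2 hs3).trans (QM.smul_le_self _ _)
      · obtain ⟨u, hu1, hu2⟩ := hZact p hp j hj
        refine ⟨u, hu1, ?_⟩
        refine le_trans ?_ hu2
        refine QM.smul_mono_right u ?_
        calc (p.2 * (st d).1) • d ≤ (p.2 * (st d).1) • p.1 :=
              QM.smul_mono_right _ (le_of_le_of_eq (le_sSup hd) hDeq.symm)
          _ ≤ p.2 • p.1 := QM.smul_mono_left (IQ.mul_le_left _ _) _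
  end ClaimB
/-- Gluing: if the `xᵢ` agree pairwise one-step over `Fᵢ + Fⱼ`, then they can be glued
to a single element `x` with `x ≼¹_{Fᵢ} xᵢ ≼¹_{Fᵢ} x` for all `i`. -/
theorem glue_finitely_many_filters {Q : Type u} {M : Type v}
    [IntegralQuantale Q] [QModule Q M] (hM : Shrinkable M)
    (n : ℕ) (F : Fin n → Set Q) (hF : ∀ i, IsMFilter (F i)) (x : Fin n → M)
    (hx : ∀ i j, i ≠ j → stepLE (filterSum (F i) (F j)) (x i) (x j)) :
    ∃ y : M, ∀ i, stepLE (F i) y (x i) ∧ stepLE (F i) (x i) y := by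
  classical
  have hcB := fun i : Fin n =>
    claimB hM hF hx i (Finset.univ.erase i) (Finset.notMem_erase i _)
  choose Z hZne hZmem hZcov hZact using hcB
  refine ⟨⨆ k, ⨆ p ∈ Z k, p.2 • p.1, fun i => ⟨?_, ?_⟩⟩
  · -- stepLE (F i) y (x i)
    have huex : ∀ (k : Fin n) (p : M × Q), ∃ u : Q,
        p ∈ Z k → u ∈ F i ∧ u • (p.2 • p.1) ≤ x i := by
      intro k p
      by_cases hp : p ∈ Z k
      · by_cases hk : k = i
        · subst hk
          refine ⟨⊤, fun _ => ⟨(hF k).1, ?_⟩⟩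
          rw [QModule.top_smul']
          exact (QM.smul_le_self _ _).trans (hZmem k p hp).2
        · obtain ⟨u, hu1, hu2⟩ := hZact k p hp i
            (Finset.mem_erase.mpr ⟨fun h => hk h.symm, Finset.mem_univ i⟩)
          exact ⟨u, fun _ => ⟨hu1, hu2⟩⟩
      · exact ⟨1, fun h => absurd h hp⟩
    choose u hu using huex
    refine ⟨⋃ k, (fun p => (p.2 • p.1, u k p)) '' Z k, ?_, ?_, ?_, ?_⟩
    · obtain ⟨p, hp⟩ := hZne i
      exact ⟨_, Set.mem_iUnion.mpr ⟨i, ⟨p, hp, rfl⟩⟩⟩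
    · rintro q hq
      simp only [Set.mem_iUnion, Set.mem_image] at hq
      obtain ⟨k, p, hp, rfl⟩ := hq
      exact (hu k p hp).1
    · refine iSup_le fun k => iSup₂_le fun p hp => ?_
      exact le_iSup₂_of_le (p.2 • p.1, u k p)
        (Set.mem_iUnion.mpr ⟨k, ⟨p, hp, rfl⟩⟩) le_rfl
    · rintro q hq
      simp only [Set.mem_iUnion, Set.mem_image] at hq
      obtain ⟨k, p, hp, rfl⟩ := hq
      exact (hu k p hp).2
  · -- stepLE (F i) (x i) y
    refine ⟨Z i, hZne i, fun p hp => (hZmem i p hp).1, hZcov i, fun p hp => ?_⟩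
    exact le_iSup_of_le i (le_iSup₂_of_le p hp le_rfl)
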